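/- Let A be a unital separable simple infinite-dimensional C*-algebra whose extreme tracial boundary ∂ₑ(T(A)) is compact. Then for any central sequence (fₙ) of uniformly bounded elements of A and any a ∈ A, max_{τ ∈ ∂ₑ(T(A))} |τ(fₙ a) − τ(fₙ)τ(a)| → 0 as n → ∞. -/

import Mathlib

open Complex Filter


open scoped ComplexOrder

/-- A tracial state on a unital C*-algebra, as a (weak-* continuous) linear functional. -/
def IsTracialState {A : Type*} [CStarAlgebra A] (τ : WeakDual ℂ A) : Prop :=
  τ 1 = 1 ∧ (∀ a : A, 0 ≤ τ (star a * a)) ∧ ∀ a b : A, τ (a * b) = τ (b * a)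

/-- The trace space `T(A)`, inside the weak-* dual of `A`. -/
def TraceSpace (A : Type*) [CStarAlgebra A] : Set (WeakDual ℂ A) :=
  {τ | IsTracialState τ}

/-- The extreme boundary `∂ₑ(T(A))` of the trace space. -/
def ExtremeTraceBoundary (A : Type*) [CStarAlgebra A] : Set (WeakDual ℂ A) :=
  {τ ∈ TraceSpace A | ∀ τ₁ ∈ TraceSpace A, ∀ τ₂ ∈ TraceSpace A, ∀ t : ℝ,
    0 < t → t < 1 → τ = (t : ℂ) • τ₁ + ((1 - t : ℝ) : ℂ) • τ₂ → τ₁ = τ ∧ τ₂ = τ}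

section Helpers

variable {A : Type*} [CStarAlgebra A]

lemma algebraMap_real_eq (c : ℝ) : algebraMap ℝ A c = (c : ℂ) • (1 : A) := by
  rw [IsScalarTower.algebraMap_apply ℝ ℂ A, Algebra.algebraMap_eq_smul_one, Complex.coe_algebraMap]

lemma exists_sqrt_sub [Nontrivial A] {h : A} (hh : IsSelfAdjoint h) {c : ℝ} (hc : ‖h‖ ≤ c) :
    ∃ w : A, star w * w = (c : ℂ) • (1 : A) - h := by
  refine ⟨cfc (fun r : ℝ => Real.sqrt (c - r)) h, ?_⟩
  have hw : IsSelfAdjoint (cfc (fun r : ℝ => Real.sqrt (c - r)) h) := cfc_predicate _ h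
  rw [hw.star_eq, ← cfc_mul _ _ h]
  have : ∀ r ∈ spectrum ℝ h, Real.sqrt (c - r) * Real.sqrt (c - r) = c - r := by
    intro r hr
    refine Real.mul_self_sqrt ?_
    have := spectrum.norm_le_norm_of_mem hr
    simp only [Real.norm_eq_abs] at this
    linarith [le_abs_self r, (abs_le.mp (le_trans this hc)).2]
  rw [cfc_congr this, cfc_sub _ _ h, cfc_const c h, cfc_id' ℝ h, algebraMap_real_eq]

lemma exists_sqrt_add [Nontrivial A] {h : A} (hh : IsSelfAdjoint h) {c : ℝ} (hc : ‖h‖ ≤ c) :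
    ∃ w : A, star w * w = (c : ℂ) • (1 : A) + h := by
  obtain ⟨w, hw⟩ := exists_sqrt_sub (h := -h) (c := c) hh.neg (by rwa [norm_neg])
  exact ⟨w, by rw [hw, sub_neg_eq_add]⟩

end Helpers

section PosFunctional

variable {A : Type*} [CStarAlgebra A]
variable (ρ : A → ℂ) (hadd : ∀ x y, ρ (x + y) = ρ x + ρ y)
  (hsmul : ∀ (c : ℂ) (x : A), ρ (c • x) = c * ρ x)
  (hpos : ∀ x : A, 0 ≤ ρ (star x * x))

include hadd hsmul hpos

lemma expand_aux (s : ℂ) (b : A) :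
    ρ (star (1 + s • b) * (1 + s • b)) =
      ρ 1 + s * ρ b + (starRingEnd ℂ) s * ρ (star b) + ((starRingEnd ℂ) s * s) * ρ (star b * b) := by
  have e0 : ((starRingEnd ℂ) s • star b) * (s • b) = ((starRingEnd ℂ) s * s) • (star b * b) :=
    smul_mul_smul_comm _ _ _ _
  have : star (1 + s • b) * (1 + s • b)
      = 1 + s • b + (starRingEnd ℂ) s • star b + ((starRingEnd ℂ) s * s) • (star b * b) := by
    rw [star_add, star_one, star_smul, RCLike.star_def, add_mul, one_mul, mul_add, mul_one, e0]
    abel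
  rw [this, hadd, hadd, hadd, hsmul, hsmul, hsmul]

lemma herm_of_pos (b : A) : ρ (star b) = (starRingEnd ℂ) (ρ b) := by
  have h1 := hpos (1 + (1:ℂ) • b)
  have h2 := hpos (1 + (I:ℂ) • b)
  rw [expand_aux ρ hadd hsmul hpos] at h1 h2
  have hα := hpos 1
  have hβ := hpos b
  rw [show (star (1:A) * 1 : A) = 1 by simp] at hα
  rw [Complex.nonneg_iff] at h1 h2 hα hβ
  rw [Complex.ext_iff]
  simp only [Complex.add_re, Complex.add_im, Complex.mul_re, Complex.mul_im,
    Complex.one_re, Complex.one_im, Complex.I_re, Complex.I_im, map_one, Complex.conj_I,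
    Complex.neg_re, Complex.neg_im, Complex.conj_re, Complex.conj_im] at h1 h2 hα hβ ⊢
  constructor
  · nlinarith [h1.2, h2.2, hα.2, hβ.2]
  · nlinarith [h1.2, h2.2, hα.2, hβ.2]

lemma cs_of_pos (b : A) :
    ‖ρ b‖ ^ 2 ≤ (ρ 1).re * (ρ (star b * b)).re := by
  have hv := herm_of_pos ρ hadd hsmul hpos b
  set N := Complex.normSq (ρ b) with hN
  have key : ∀ t : ℝ, 0 ≤ (ρ 1).re - 2 * t * N + t ^ 2 * N * (ρ (star b * b)).re := by
    intro t
    have h := hpos (1 + (-(t:ℂ) * (starRingEnd ℂ) (ρ b)) • b)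
    rw [expand_aux ρ hadd hsmul hpos, hv] at h
    rw [Complex.nonneg_iff] at h
    have := h.1
    simp only [Complex.add_re, Complex.mul_re, Complex.mul_im, Complex.neg_re, Complex.neg_im,
      Complex.ofReal_re, Complex.ofReal_im, map_mul, Complex.conj_re, Complex.conj_im,
      Complex.conj_conj, Complex.mul_conj] at this ⊢
    rw [hN, Complex.normSq_apply] at *
    nlinarith [this]
  have hα : 0 ≤ (ρ 1).re := by simpa using key 0
  have hNn : 0 ≤ N := Complex.normSq_nonneg _
  have habs : ‖ρ b‖ ^ 2 = N := Complex.sq_norm _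
  have hβ := hpos b
  rw [Complex.nonneg_iff] at hβ
  rw [habs]
  rcases eq_or_lt_of_le hβ.1 with h0 | h0
  · rcases eq_or_lt_of_le hNn with hN0 | hN0
    · rw [← hN0, ← h0]; positivity
    · exfalso
      have := key (((ρ 1).re + 1) / N)
      rw [← h0] at this
      have hne : N ≠ 0 := ne_of_gt hN0
      field_simp at this
      nlinarith [this, hN0, hα]
  · have hk := key (ρ (star b * b)).re⁻¹
    have hne : (ρ (star b * b)).re ≠ 0 := ne_of_gt h0
    have e : (ρ (star b * b)).re⁻¹ ^ 2 * N * (ρ (star b * b)).re = (ρ (star b * b)).re⁻¹ * N := by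
      field_simp [pow_two]
    rw [e] at hk
    have hk' : 0 ≤ (ρ 1).re - (ρ (star b * b)).re⁻¹ * N := by linarith
    have h2 := mul_nonneg h0.le hk'
    rw [mul_sub, ← mul_assoc, mul_inv_cancel₀ hne, one_mul] at h2
    linarith

end PosFunctional

section TraceFacts

variable {A : Type*} [CStarAlgebra A]

lemma tracial_nontrivial {τ : WeakDual ℂ A} (hτ : IsTracialState τ) : Nontrivial A := by
  refine nontrivial_of_ne 1 0 fun h => ?_
  have h1 := hτ.1
  rw [h, map_zero] at h1
  exact one_ne_zero h1.symm

lemma tracial_norm_bound {τ : WeakDual ℂ A} (hτ : IsTracialState τ) (y : A) :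
    ‖τ y‖ ≤ ‖y‖ := by
  haveI := tracial_nontrivial hτ
  have hadd : ∀ x y : A, τ (x + y) = τ x + τ y := fun x y => map_add τ x y
  have hsmul : ∀ (c : ℂ) (x : A), τ (c • x) = c * τ x := fun c x => by
    rw [map_smul, smul_eq_mul]
  have hcs := cs_of_pos (⇑τ) hadd hsmul hτ.2.1 y
  rw [hτ.1] at hcs
  have hsa : IsSelfAdjoint (star y * y) := IsSelfAdjoint.star_mul_self y
  obtain ⟨w, hw⟩ := exists_sqrt_sub hsa (le_refl ‖star y * y‖)
  have hpw := hτ.2.1 w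
  rw [hw, map_sub, map_smul, hτ.1, smul_eq_mul, mul_one] at hpw
  rw [Complex.nonneg_iff] at hpw
  simp only [Complex.sub_re, Complex.ofReal_re] at hpw
  have hre : (τ (star y * y)).re ≤ ‖star y * y‖ := by linarith [hpw.1]
  rw [CStarRing.norm_star_mul_self] at hre
  have : ‖τ y‖ ^ 2 ≤ ‖y‖ * ‖y‖ := by
    calc ‖τ y‖ ^ 2 ≤ 1 * (τ (star y * y)).re := by simpa using hcs
    _ ≤ ‖y‖ * ‖y‖ := by rw [one_mul]; exact hre
  nlinarith [norm_nonneg (τ y), norm_nonneg y]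

end TraceFacts

section KeyLemma

variable {A : Type*} [CStarAlgebra A]

lemma ofReal_mul_nonneg {s : ℝ} (hs : 0 ≤ s) {z : ℂ} (hz : 0 ≤ z) : 0 ≤ (s : ℂ) * z := by
  rw [Complex.nonneg_iff] at hz ⊢
  simp only [Complex.mul_re, Complex.mul_im, Complex.ofReal_re, Complex.ofReal_im]
  constructor
  · nlinarith [hz.1]
  · rw [← hz.2]; ring

lemma key_lemma (hcpt : IsCompact (ExtremeTraceBoundary A))
    (g : ℕ → A)
    (hgM : ∀ n, ‖g n‖ ≤ 1)
    (hdec1 : ∀ n, ∃ c : A, star c * c = g n)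
    (hdec2 : ∀ n, ∃ d : A, star d * d = 1 - g n)
    (hgc : ∀ x : A, Tendsto (fun n => ‖g n * x - x * g n‖) atTop (nhds 0))
    (a : A) {ε : ℝ} (hε : 0 < ε) :
    ∀ᶠ n in atTop, ∀ τ ∈ ExtremeTraceBoundary A,
      ‖τ (g n * a) - τ (g n) * τ a‖ < ε := by
  by_contra hcon
  rw [Filter.not_eventually] at hcon
  have hcon' : ∃ᶠ n in atTop, ∃ τ ∈ ExtremeTraceBoundary A,
      ε ≤ ‖τ (g n * a) - τ (g n) * τ a‖ := by
    refine hcon.mono fun n hn => ?_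
    push_neg at hn
    exact hn
  obtain ⟨φ, hφmono, hφ⟩ := Filter.extraction_of_frequently_atTop hcon'
  choose τs hτsK hτsε using hφ
  have hτsTS : ∀ k, IsTracialState (τs k) := fun k => (hτsK k).1
  haveI : Nontrivial A := tracial_nontrivial (hτsTS 0)
  obtain ⟨U, hU⟩ := Ultrafilter.exists_le (atTop : Filter ℕ)
  have hKmem : (U.map τs : Filter (WeakDual ℂ A)) ≤ Filter.principal (ExtremeTraceBoundary A) :=
    Filter.le_principal_iff.2 (Filter.mem_map.2 (Filter.univ_mem' fun k => hτsK k))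
  obtain ⟨τinf, hτinfK, hle'⟩ := hcpt.ultrafilter_le_nhds (U.map τs) hKmem
  have hle : Tendsto τs (U : Filter ℕ) (nhds τinf) := hle'
  have hτinfTS : IsTracialState τinf := hτinfK.1
  have htp : ∀ x : A, Tendsto (fun k => τs k x) (U : Filter ℕ) (nhds (τinf x)) :=
    fun x => ((WeakDual.eval_continuous x).tendsto τinf).comp hle
  set G : ℕ → A := fun k => g (φ k) with hG
  have hcomm : ∀ x : A, Tendsto (fun k => ‖G k * x - x * G k‖) (U : Filter ℕ) (nhds 0) :=
    fun x => ((hgc x).comp hφmono.tendsto_atTop).mono_left hU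
  have hval_bound : ∀ (x : A) (k : ℕ), ‖τs k (G k * x)‖ ≤ ‖x‖ := by
    intro x k
    calc ‖τs k (G k * x)‖ ≤ ‖G k * x‖ := tracial_norm_bound (hτsTS k) _
    _ ≤ ‖G k‖ * ‖x‖ := norm_mul_le _ _
    _ ≤ 1 * ‖x‖ := mul_le_mul_of_nonneg_right (hgM (φ k)) (norm_nonneg x)
    _ = ‖x‖ := one_mul _
  have hex : ∀ x : A, ∃ c : ℂ, Tendsto (fun k => τs k (G k * x)) (U : Filter ℕ) (nhds c) := by
    intro x
    have hcpt' : IsCompact (Metric.closedBall (0 : ℂ) ‖x‖) := isCompact_closedBall _ _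
    have hmem : (U.map (fun k => τs k (G k * x)) : Filter ℂ)
        ≤ Filter.principal (Metric.closedBall 0 ‖x‖) := by
      refine Filter.le_principal_iff.2 (Filter.mem_map.2 (Filter.univ_mem' fun k => ?_))
      rw [Set.mem_preimage, Metric.mem_closedBall, dist_zero_right]
      simpa using hval_bound x k
    obtain ⟨c, _, hc⟩ := hcpt'.ultrafilter_le_nhds _ hmem
    exact ⟨c, hc⟩
  choose Psi hΨ using hex
  have hΨadd : ∀ x y : A, Psi (x + y) = Psi x + Psi y := by
    intro x y
    refine tendsto_nhds_unique (hΨ (x + y)) ?_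
    have heq : (fun k => τs k (G k * (x + y))) = fun k => τs k (G k * x) + τs k (G k * y) := by
      funext k; rw [mul_add, map_add]
    rw [heq]
    exact (hΨ x).add (hΨ y)
  have hΨsmul : ∀ (c : ℂ) (x : A), Psi (c • x) = c * Psi x := by
    intro c x
    refine tendsto_nhds_unique (hΨ (c • x)) ?_
    have heq : (fun k => τs k (G k * (c • x))) = fun k => c * τs k (G k * x) := by
      funext k; rw [mul_smul_comm, map_smul, smul_eq_mul]
    rw [heq]
    exact (hΨ x).const_mul c
  have hΨbound : ∀ x : A, ‖Psi x‖ ≤ ‖x‖ := by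
    intro x
    have habs : Tendsto (fun k => ‖τs k (G k * x)‖) (U : Filter ℕ)
        (nhds (‖Psi x‖)) := (continuous_norm.tendsto _).comp (hΨ x)
    exact le_of_tendsto habs (Filter.Eventually.of_forall (hval_bound x))
  have hΨtr : ∀ x y : A, Psi (x * y) = Psi (y * x) := by
    intro x y
    refine tendsto_nhds_unique (hΨ (x * y)) ?_
    have hdiff : Tendsto (fun k => τs k (G k * (x * y)) - τs k (G k * (y * x)))
        (U : Filter ℕ) (nhds 0) := by
      have heq : ∀ k, τs k (G k * (x * y)) - τs k (G k * (y * x))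
          = τs k ((G k * x - x * G k) * y) := by
        intro k
        have h1 : τs k (G k * (y * x)) = τs k ((x * G k) * y) := by
          have e1 : G k * (y * x) = (G k * y) * x := by rw [mul_assoc]
          have e2 : x * (G k * y) = (x * G k) * y := by rw [mul_assoc]
          rw [e1, (hτsTS k).2.2 (G k * y) x, e2]
        rw [sub_mul, map_sub, mul_assoc, h1]
      have hbnd : ∀ k, ‖τs k (G k * (x * y)) - τs k (G k * (y * x))‖
          ≤ ‖G k * x - x * G k‖ * ‖y‖ := by
        intro k
        rw [heq k]
        calc ‖τs k ((G k * x - x * G k) * y)‖ ≤ ‖(G k * x - x * G k) * y‖ := by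
              simpa using
                tracial_norm_bound (hτsTS k) ((G k * x - x * G k) * y)
        _ ≤ ‖G k * x - x * G k‖ * ‖y‖ := norm_mul_le _ _
      refine squeeze_zero_norm hbnd ?_
      simpa using (hcomm x).mul_const ‖y‖
    have heq2 : (fun k => τs k (G k * (x * y)))
        = fun k => τs k (G k * (y * x)) + (τs k (G k * (x * y)) - τs k (G k * (y * x))) := by
      funext k; ring
    rw [heq2]
    simpa using (hΨ (y * x)).add hdiff
  have hval_pos : ∀ (x : A) (k : ℕ), 0 ≤ τs k (G k * (star x * x)) := by
    intro x k
    obtain ⟨c, hc⟩ := hdec1 (φ k)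
    have e : τs k (G k * (star x * x)) = τs k (star (c * star x) * (c * star x)) := by
      have e1 : G k * (star x * x) = (G k * star x) * x := by rw [mul_assoc]
      have e2 : star (c * star x) * (c * star x) = x * (G k * star x) := by
        rw [star_mul, star_star]
        calc (x * star c) * (c * star x) = x * ((star c * c) * star x) := by noncomm_ring
        _ = x * (G k * star x) := by rw [show star c * c = G k from hc]
      rw [e1, (hτsTS k).2.2 (G k * star x) x, ← e2]
    rw [e]
    exact (hτsTS k).2.1 _
  have hlim_nonneg : ∀ {f : ℕ → ℂ} {c : ℂ}, Tendsto f (U : Filter ℕ) (nhds c)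
      → (∀ k, 0 ≤ f k) → 0 ≤ c := by
    intro f c hf hps
    rw [Complex.nonneg_iff]
    constructor
    · exact ge_of_tendsto ((Complex.continuous_re.tendsto _).comp hf)
        (Filter.Eventually.of_forall fun k => (Complex.nonneg_iff.mp (hps k)).1)
    · have him : (fun k => (f k).im) = fun _ => (0 : ℝ) :=
        funext fun k => ((Complex.nonneg_iff.mp (hps k)).2).symm
      have h1 : Tendsto (fun k => (f k).im) (U : Filter ℕ) (nhds c.im) :=
        (Complex.continuous_im.tendsto _).comp hf
      rw [him] at h1
      exact (tendsto_nhds_unique h1 tendsto_const_nhds).symm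
  have hΨpos : ∀ x : A, 0 ≤ Psi (star x * x) := fun x =>
    hlim_nonneg (hΨ (star x * x)) (hval_pos x)
  have hval_pos2 : ∀ (x : A) (k : ℕ), 0 ≤ τs k (star x * x) - τs k (G k * (star x * x)) := by
    intro x k
    obtain ⟨d, hd⟩ := hdec2 (φ k)
    have e0 : τs k (star x * x) - τs k (G k * (star x * x)) = τs k ((1 - G k) * (star x * x)) := by
      rw [sub_mul, one_mul, map_sub]
    have e : τs k ((1 - G k) * (star x * x)) = τs k (star (d * star x) * (d * star x)) := by
      have e1 : (1 - G k) * (star x * x) = ((1 - G k) * star x) * x := by rw [mul_assoc]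
      have e2 : star (d * star x) * (d * star x) = x * ((1 - G k) * star x) := by
        rw [star_mul, star_star]
        calc (x * star d) * (d * star x) = x * ((star d * d) * star x) := by noncomm_ring
        _ = x * ((1 - G k) * star x) := by rw [show star d * d = 1 - G k from hd]
      rw [e1, (hτsTS k).2.2 ((1 - G k) * star x) x, ← e2]
    rw [e0, e]
    exact (hτsTS k).2.1 _
  have hΨpos2 : ∀ x : A, 0 ≤ τinf (star x * x) - Psi (star x * x) := fun x =>
    hlim_nonneg ((htp (star x * x)).sub (hΨ (star x * x))) (hval_pos2 x)
  have hΨ1 : Tendsto (fun k => τs k (G k)) (U : Filter ℕ) (nhds (Psi 1)) := by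
    have heq : (fun k => τs k (G k)) = fun k => τs k (G k * 1) := by funext k; rw [mul_one]
    rw [heq]; exact hΨ 1
  have hgap : ε ≤ ‖Psi a - Psi 1 * τinf a‖ := by
    have h1 : Tendsto (fun k => τs k (G k * a) - τs k (G k) * τs k a) (U : Filter ℕ)
        (nhds (Psi a - Psi 1 * τinf a)) := (hΨ a).sub (hΨ1.mul (htp a))
    have h2 := (continuous_norm.tendsto _).comp h1
    exact ge_of_tendsto h2 (Filter.Eventually.of_forall fun k => hτsε k)
  set lam := Psi 1 with hlamdef
  have hlampos : 0 ≤ lam := by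
    have := hΨpos 1; rwa [show star (1 : A) * 1 = 1 by simp] at this
  have hlamle : 0 ≤ τinf 1 - lam := by
    have := hΨpos2 1; rwa [show star (1 : A) * 1 = 1 by simp] at this
  rw [hτinfTS.1] at hlamle
  set r := lam.re with hrdef
  have hlam_eq : lam = (r : ℂ) := by
    rw [Complex.nonneg_iff] at hlampos
    rw [Complex.ext_iff]
    exact ⟨by simp [hrdef], by simp [← hlampos.2]⟩
  have hr0 : 0 ≤ r := (Complex.nonneg_iff.mp hlampos).1
  have hr1 : r ≤ 1 := by
    rw [Complex.nonneg_iff] at hlamle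
    have := hlamle.1
    simp only [Complex.sub_re, Complex.one_re] at this
    linarith
  have hfinal : Psi a = lam * τinf a := by
    rcases eq_or_lt_of_le hr0 with h0 | h0
    · -- r = 0
      have hcs := cs_of_pos Psi hΨadd hΨsmul hΨpos a
      have hre0 : (Psi 1).re = 0 := by rw [← hlamdef, ← hrdef, ← h0]
      rw [hre0, zero_mul] at hcs
      have habs0 : ‖Psi a‖ = 0 := by
        nlinarith [norm_nonneg (Psi a)]
      have : Psi a = 0 := by rwa [norm_eq_zero] at habs0
      rw [this, hlam_eq, ← h0]
      simp
    rcases eq_or_lt_of_le hr1 with h1 | h1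
    · -- r = 1
      have hadd' : ∀ x y : A, (τinf (x + y) - Psi (x + y)) = (τinf x - Psi x) + (τinf y - Psi y) := by
        intro x y; rw [map_add, hΨadd]; ring
      have hsmul' : ∀ (c : ℂ) (x : A), (τinf (c • x) - Psi (c • x)) = c * (τinf x - Psi x) := by
        intro c x; rw [map_smul, hΨsmul, smul_eq_mul]; ring
      have hcs := cs_of_pos (fun x => τinf x - Psi x) hadd' hsmul' hΨpos2 a
      have hre0 : (τinf 1 - Psi 1).re = 0 := by
        rw [hτinfTS.1, ← hlamdef, hlam_eq]
        simp [h1]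
      simp only [hre0, zero_mul] at hcs
      have habs0 : ‖τinf a - Psi a‖ = 0 := by
        nlinarith [norm_nonneg (τinf a - Psi a)]
      have heq : τinf a - Psi a = 0 := by rwa [norm_eq_zero] at habs0
      have : Psi a = τinf a := by linear_combination -heq
      rw [this, hlam_eq, h1]
      simp
    · -- 0 < r < 1 : extremality
      have hrne : (r : ℂ) ≠ 0 := Complex.ofReal_ne_zero.2 (ne_of_gt h0)
      have h1rne : ((1 - r : ℝ) : ℂ) ≠ 0 := Complex.ofReal_ne_zero.2 (by linarith)
      have hΨbound' : ∀ x : A, ‖Psi x‖ ≤ 1 * ‖x‖ := by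
        intro x; rw [one_mul]; exact hΨbound x
      let ψL : A →ₗ[ℂ] ℂ :=
        { toFun := Psi
          map_add' := hΨadd
          map_smul' := fun c x => by simpa using hΨsmul c x }
      let ψ : WeakDual ℂ A := LinearMap.mkContinuous ψL 1 hΨbound'
      have hψapp : ∀ x, ψ x = Psi x := fun x => rfl
      set τ₁ : WeakDual ℂ A := ((r : ℂ))⁻¹ • ψ with hτ₁def
      set τ₂ : WeakDual ℂ A := (((1 - r : ℝ) : ℂ))⁻¹ • (τinf - ψ) with hτ₂def
      have hτ₁app : ∀ x, τ₁ x = (r : ℂ)⁻¹ * Psi x := fun x => rfl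
      have hτ₂app : ∀ x, τ₂ x = ((1 - r : ℝ) : ℂ)⁻¹ * (τinf x - Psi x) := fun x => rfl
      have hτ₁TS : τ₁ ∈ TraceSpace A := by
        refine ⟨?_, ?_, ?_⟩
        · rw [hτ₁app, ← hlamdef, hlam_eq]; exact inv_mul_cancel₀ hrne
        · intro x
          rw [hτ₁app, ← Complex.ofReal_inv]
          exact ofReal_mul_nonneg (inv_nonneg.2 hr0) (hΨpos x)
        · intro x y; rw [hτ₁app, hτ₁app, hΨtr]
      have hτ₂TS : τ₂ ∈ TraceSpace A := by
        refine ⟨?_, ?_, ?_⟩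
        · rw [hτ₂app, hτinfTS.1, ← hlamdef, hlam_eq, ← Complex.ofReal_one, ← Complex.ofReal_sub]
          exact inv_mul_cancel₀ h1rne
        · intro x
          rw [hτ₂app, ← Complex.ofReal_inv]
          exact ofReal_mul_nonneg (inv_nonneg.2 (by linarith)) (hΨpos2 x)
        · intro x y
          rw [hτ₂app, hτ₂app, hΨtr, hτinfTS.2.2]
      have hdecEq : τinf = (r : ℂ) • τ₁ + ((1 - r : ℝ) : ℂ) • τ₂ := by
        apply DFunLike.ext
        intro x
        have happ : ((r : ℂ) • τ₁ + ((1 - r : ℝ) : ℂ) • τ₂) x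
            = (r : ℂ) * τ₁ x + ((1 - r : ℝ) : ℂ) * τ₂ x := rfl
        rw [happ, hτ₁app, hτ₂app, ← mul_assoc, ← mul_assoc,
          mul_inv_cancel₀ hrne, mul_inv_cancel₀ h1rne, one_mul, one_mul]
        ring
      obtain ⟨heq1, -⟩ := hτinfK.2 τ₁ hτ₁TS τ₂ hτ₂TS r h0 h1 hdecEq
      have hfa := DFunLike.congr_fun heq1 a
      rw [hτ₁app] at hfa
      rw [hlam_eq]
      field_simp at hfa
      linear_combination hfa
  rw [hfinal] at hgap
  simp only [sub_self, norm_zero] at hgap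
  linarith



lemma sa_block (hcpt : IsCompact (ExtremeTraceBoundary A))
    (p : ℕ → A) (C' : ℝ) (hC' : 0 < C')
    (hpsa : ∀ n, IsSelfAdjoint (p n)) (hpbd : ∀ n, ‖p n‖ ≤ C')
    (hpc : ∀ x : A, Tendsto (fun n => ‖p n * x - x * p n‖) atTop (nhds 0))
    [Nontrivial A]
    (a : A) {ε : ℝ} (hε : 0 < ε) :
    ∀ᶠ n in atTop, ∀ τ ∈ ExtremeTraceBoundary A,
      ‖τ (p n * a) - τ (p n) * τ a‖ < ε := by
  set co : ℂ := (((2 * C')⁻¹ : ℝ) : ℂ) with hco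
  set g : ℕ → A := fun n => co • ((C' : ℂ) • 1 + p n) with hg
  have h2C' : (0:ℝ) < 2 * C' := by linarith
  have h2C'ne : (2 * C' : ℝ) ≠ 0 := ne_of_gt h2C'
  have hs : Real.sqrt ((2 * C')⁻¹) * Real.sqrt ((2 * C')⁻¹) = (2 * C')⁻¹ :=
    Real.mul_self_sqrt (inv_nonneg.2 h2C'.le)
  have hscale : ∀ w : A, star ((Real.sqrt ((2 * C')⁻¹) : ℂ) • w) * ((Real.sqrt ((2 * C')⁻¹) : ℂ) • w)
      = co • (star w * w) := by
    intro w
    rw [star_smul, RCLike.star_def, Complex.conj_ofReal, smul_mul_smul_comm,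
      ← Complex.ofReal_mul, hs]
  have hdec1 : ∀ n, ∃ c : A, star c * c = g n := by
    intro n
    obtain ⟨w, hw⟩ := exists_sqrt_add (hpsa n) (hpbd n)
    exact ⟨_, by rw [hscale w, hw]⟩
  have hcc : ((2 * C' : ℝ) : ℂ) * co = 1 := by
    rw [hco, ← Complex.ofReal_mul, mul_inv_cancel₀ h2C'ne, Complex.ofReal_one]
  have honemg : ∀ n, (1 : A) - g n = co • ((C' : ℂ) • 1 - p n) := by
    intro n
    have hsum : g n + co • ((C' : ℂ) • 1 - p n) = 1 := by
      rw [hg]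
      show co • ((C' : ℂ) • 1 + p n) + co • ((C' : ℂ) • 1 - p n) = 1
      rw [← smul_add]
      have e : ((C' : ℂ) • (1:A) + p n + ((C' : ℂ) • 1 - p n)) = ((2 * C' : ℝ) : ℂ) • (1:A) := by
        push_cast
        module
      rw [e, smul_smul, mul_comm, hcc, one_smul]
    exact (eq_sub_of_add_eq' hsum).symm
  have hdec2 : ∀ n, ∃ d : A, star d * d = 1 - g n := by
    intro n
    obtain ⟨w, hw⟩ := exists_sqrt_sub (hpsa n) (hpbd n)
    exact ⟨_, by rw [hscale w, hw, honemg n]⟩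
  have hgM : ∀ n, ‖g n‖ ≤ 1 := by
    intro n
    have h1 : ‖g n‖ ≤ ‖co‖ * (‖(C' : ℂ) • (1:A)‖ + ‖p n‖) := by
      rw [hg]
      show ‖co • ((C' : ℂ) • 1 + p n)‖ ≤ _
      rw [norm_smul]
      exact mul_le_mul_of_nonneg_left (norm_add_le _ _) (norm_nonneg _)
    have hco_norm : ‖co‖ = (2 * C')⁻¹ := by
      rw [hco, Complex.norm_real, Real.norm_eq_abs, abs_of_pos (by positivity)]
    have hone : ‖(C' : ℂ) • (1:A)‖ = C' := by
      rw [norm_smul, norm_one, mul_one, Complex.norm_real, Real.norm_eq_abs, abs_of_pos hC']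
    rw [hco_norm, hone] at h1
    calc ‖g n‖ ≤ (2 * C')⁻¹ * (C' + ‖p n‖) := h1
    _ ≤ (2 * C')⁻¹ * (C' + C') := by
        exact mul_le_mul_of_nonneg_left (by linarith [hpbd n]) (by positivity)
    _ = 1 := by field_simp; ring
  have hgc : ∀ x : A, Tendsto (fun n => ‖g n * x - x * g n‖) atTop (nhds 0) := by
    intro x
    have he : ∀ n, g n * x - x * g n = co • (p n * x - x * p n) := by
      intro n
      rw [hg]
      show (co • ((C' : ℂ) • 1 + p n)) * x - x * (co • ((C' : ℂ) • 1 + p n)) = _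
      rw [smul_mul_assoc, mul_smul_comm, ← smul_sub]
      congr 1
      rw [add_mul, mul_add, smul_mul_assoc, mul_smul_comm, one_mul, mul_one]
      abel
    have heq : (fun n => ‖g n * x - x * g n‖) = fun n => ‖co‖ * ‖p n * x - x * p n‖ := by
      funext n; rw [he n, norm_smul]
    rw [heq]
    simpa using (hpc x).const_mul ‖co‖
  have hkey := key_lemma hcpt g hgM hdec1 hdec2 hgc a
    (ε := ε / (2 * C')) (by positivity)
  refine hkey.mono fun n hn τ hτ => ?_
  have hτTS : IsTracialState τ := hτ.1
  have hτ1 : τ 1 = 1 := hτTS.1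
  have e1 : τ (g n * a) = co * ((C' : ℂ) * τ a + τ (p n * a)) := by
    have e : g n * a = co • ((C' : ℂ) • a + p n * a) := by
      rw [hg]
      show (co • ((C' : ℂ) • 1 + p n)) * a = _
      rw [smul_mul_assoc, add_mul, smul_mul_assoc, one_mul]
    rw [e, map_smul, map_add, map_smul, smul_eq_mul, smul_eq_mul]
  have e2 : τ (g n) = co * ((C' : ℂ) + τ (p n)) := by
    rw [hg]
    show τ (co • ((C' : ℂ) • 1 + p n)) = _
    rw [map_smul, map_add, map_smul, hτ1, smul_eq_mul, smul_eq_mul, mul_one]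
  have hrel : τ (p n * a) - τ (p n) * τ a
      = ((2 * C' : ℝ) : ℂ) * (τ (g n * a) - τ (g n) * τ a) := by
    rw [e1, e2]
    linear_combination (τ (p n * a) - τ (p n) * τ a) * hcc.symm
  rw [hrel, norm_mul, Complex.norm_real, Real.norm_eq_abs, abs_of_pos h2C']
  calc (2 * C') * ‖τ (g n * a) - τ (g n) * τ a‖
      < (2 * C') * (ε / (2 * C')) := by
        exact mul_lt_mul_of_pos_left (hn τ hτ) h2C'
  _ = ε := by field_simp

end KeyLemma


/-- A C*-algebra is simple if it has no nontrivial closed two-sided ideals. -/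
def IsSimpleCStarAlgebra (A : Type*) [CStarAlgebra A] : Prop :=
  ∀ I : TwoSidedIdeal A, IsClosed (I : Set A) → I = ⊥ ∨ I = ⊤

/-- Let `A` be a unital separable simple infinite-dimensional C*-algebra
whose extreme tracial boundary `∂ₑ(T(A))` is compact.  Then for any uniformly bounded
central sequence `(fₙ)` in `A` and any `a ∈ A`,
`max_{τ ∈ ∂ₑ(T(A))} |τ(fₙ a) − τ(fₙ)τ(a)| → 0`. -/
theorem statement8
    (A : Type) [CStarAlgebra A] [TopologicalSpace.SeparableSpace A]
    (hsimple : IsSimpleCStarAlgebra A)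
    (hinfdim : ¬ FiniteDimensional ℂ A)
    (htrace : (TraceSpace A).Nonempty)
    (hcpt : IsCompact (ExtremeTraceBoundary A))
    (f : ℕ → A) (C : ℝ) (hbdd : ∀ n, ‖f n‖ ≤ C)
    (hcentral : ∀ x : A,
      Filter.Tendsto (fun n => ‖f n * x - x * f n‖) Filter.atTop (nhds 0))
    (a : A) :
    Filter.Tendsto
      (fun n => sSup ((fun τ : WeakDual ℂ A =>
        ‖τ (f n * a) - τ (f n) * τ a‖) '' ExtremeTraceBoundary A))
      Filter.atTop (nhds 0) := by
  obtain ⟨τ0, hτ0⟩ := htrace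
  haveI : Nontrivial A := tracial_nontrivial hτ0
  have hC0 : 0 ≤ C := le_trans (norm_nonneg (f 0)) (hbdd 0)
  have hC' : (0:ℝ) < C + 1 := by linarith
  have hhalf : ‖(2⁻¹ : ℂ)‖ = 2⁻¹ := by norm_num
  have hIhalf : ‖(-(Complex.I/2) : ℂ)‖ = 2⁻¹ := by
    rw [norm_neg, norm_div, Complex.norm_I]
    norm_num
  -- the self-adjoint and anti-self-adjoint parts
  have hpsa : ∀ n, IsSelfAdjoint ((2⁻¹ : ℂ) • (f n + star (f n))) := by
    intro n
    rw [IsSelfAdjoint, star_smul, star_add, star_star]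
    simp [add_comm]
  have hqsa : ∀ n, IsSelfAdjoint ((-(Complex.I/2)) • (f n - star (f n))) := by
    intro n
    rw [IsSelfAdjoint, star_smul, star_sub, star_star]
    simp only [star_neg, star_div₀, RCLike.star_def, Complex.conj_I, RCLike.conj_ofNat]
    rw [neg_div, neg_neg, neg_smul, ← smul_neg, neg_sub]
  have hpbd : ∀ n, ‖(2⁻¹ : ℂ) • (f n + star (f n))‖ ≤ C + 1 := by
    intro n
    rw [norm_smul, hhalf]
    have h1 : ‖f n + star (f n)‖ ≤ 2 * C := by
      calc ‖f n + star (f n)‖ ≤ ‖f n‖ + ‖star (f n)‖ := norm_add_le _ _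
      _ ≤ C + C := by rw [norm_star]; exact add_le_add (hbdd n) (hbdd n)
      _ = 2 * C := by ring
    nlinarith
  have hqbd : ∀ n, ‖(-(Complex.I/2)) • (f n - star (f n))‖ ≤ C + 1 := by
    intro n
    rw [norm_smul, hIhalf]
    have h1 : ‖f n - star (f n)‖ ≤ 2 * C := by
      calc ‖f n - star (f n)‖ ≤ ‖f n‖ + ‖star (f n)‖ := norm_sub_le _ _
      _ ≤ C + C := by rw [norm_star]; exact add_le_add (hbdd n) (hbdd n)
      _ = 2 * C := by ring
    nlinarith
  have hstar : ∀ (n : ℕ) (x : A), ‖star (f n) * x - x * star (f n)‖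
      = ‖f n * star x - star x * f n‖ := by
    intro n x
    have e : star (f n) * x - x * star (f n) = -star (f n * star x - star x * f n) := by
      simp only [star_sub, star_mul, star_star]
      abel
    rw [e, norm_neg, norm_star]
  have hpc : ∀ x : A, Filter.Tendsto
      (fun n => ‖((2⁻¹ : ℂ) • (f n + star (f n))) * x - x * ((2⁻¹ : ℂ) • (f n + star (f n)))‖)
      Filter.atTop (nhds 0) := by
    intro x
    have hb : ∀ n, ‖((2⁻¹ : ℂ) • (f n + star (f n))) * x - x * ((2⁻¹ : ℂ) • (f n + star (f n)))‖
        ≤ 2⁻¹ * (‖f n * x - x * f n‖ + ‖f n * star x - star x * f n‖) := by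
      intro n
      have e : ((2⁻¹ : ℂ) • (f n + star (f n))) * x - x * ((2⁻¹ : ℂ) • (f n + star (f n)))
          = (2⁻¹ : ℂ) • ((f n * x - x * f n) + (star (f n) * x - x * star (f n))) := by
        rw [smul_mul_assoc, mul_smul_comm, ← smul_sub]
        congr 1
        rw [add_mul, mul_add]
        abel
      rw [e, norm_smul, hhalf]
      refine mul_le_mul_of_nonneg_left ?_ (by norm_num)
      refine le_trans (norm_add_le _ _) ?_
      rw [hstar n x]
    refine squeeze_zero (fun n => norm_nonneg _) hb ?_
    have := ((hcentral x).add (hcentral (star x))).const_mul (2⁻¹ : ℝ)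
    simpa using this
  have hqc : ∀ x : A, Filter.Tendsto
      (fun n => ‖((-(Complex.I/2)) • (f n - star (f n))) * x
        - x * ((-(Complex.I/2)) • (f n - star (f n)))‖) Filter.atTop (nhds 0) := by
    intro x
    have hb : ∀ n, ‖((-(Complex.I/2)) • (f n - star (f n))) * x
          - x * ((-(Complex.I/2)) • (f n - star (f n)))‖
        ≤ 2⁻¹ * (‖f n * x - x * f n‖ + ‖f n * star x - star x * f n‖) := by
      intro n
      have e : ((-(Complex.I/2)) • (f n - star (f n))) * x
            - x * ((-(Complex.I/2)) • (f n - star (f n)))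
          = (-(Complex.I/2)) • ((f n * x - x * f n) - (star (f n) * x - x * star (f n))) := by
        rw [smul_mul_assoc, mul_smul_comm, ← smul_sub]
        congr 1
        rw [sub_mul, mul_sub]
        abel
      rw [e, norm_smul, hIhalf]
      refine mul_le_mul_of_nonneg_left ?_ (by norm_num)
      refine le_trans (norm_sub_le _ _) ?_
      rw [hstar n x]
    refine squeeze_zero (fun n => norm_nonneg _) hb ?_
    have := ((hcentral x).add (hcentral (star x))).const_mul (2⁻¹ : ℝ)
    simpa using this
  have hdecf : ∀ n, f n = (2⁻¹ : ℂ) • (f n + star (f n))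
      + Complex.I • ((-(Complex.I/2)) • (f n - star (f n))) := by
    intro n
    rw [smul_smul]
    match_scalars <;> simp <;> ring_nf <;> simp [Complex.I_sq] <;> norm_num
  have hmain : ∀ ε : ℝ, 0 < ε → ∀ᶠ n in Filter.atTop, ∀ τ ∈ ExtremeTraceBoundary A,
      ‖τ (f n * a) - τ (f n) * τ a‖ < ε := by
    intro ε hε
    have h1 := sa_block hcpt (fun n => (2⁻¹ : ℂ) • (f n + star (f n))) (C + 1) hC'
      hpsa hpbd hpc a (ε := ε/2) (by positivity)
    have h2 := sa_block hcpt (fun n => (-(Complex.I/2)) • (f n - star (f n))) (C + 1) hC'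
      hqsa hqbd hqc a (ε := ε/2) (by positivity)
    filter_upwards [h1, h2] with n hn1 hn2
    intro τ hτ
    have e1 : τ (f n * a) = τ (((2⁻¹ : ℂ) • (f n + star (f n))) * a)
        + Complex.I * τ (((-(Complex.I/2)) • (f n - star (f n))) * a) := by
      conv_lhs => rw [hdecf n]
      rw [add_mul, smul_mul_assoc (Complex.I), map_add, map_smul, smul_eq_mul]
    have e2 : τ (f n) = τ ((2⁻¹ : ℂ) • (f n + star (f n)))
        + Complex.I * τ ((-(Complex.I/2)) • (f n - star (f n))) := by
      conv_lhs => rw [hdecf n]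
      rw [map_add]
      congr 1
      rw [map_smul, smul_eq_mul]
    have e3 : τ (f n * a) - τ (f n) * τ a
        = (τ (((2⁻¹ : ℂ) • (f n + star (f n))) * a)
            - τ ((2⁻¹ : ℂ) • (f n + star (f n))) * τ a)
          + Complex.I * (τ (((-(Complex.I/2)) • (f n - star (f n))) * a)
            - τ ((-(Complex.I/2)) • (f n - star (f n))) * τ a) := by
      rw [e1, e2]; ring
    rw [e3]
    have hle := norm_add_le
      (τ (((2⁻¹ : ℂ) • (f n + star (f n))) * a) - τ ((2⁻¹ : ℂ) • (f n + star (f n))) * τ a)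
      (Complex.I * (τ (((-(Complex.I/2)) • (f n - star (f n))) * a)
        - τ ((-(Complex.I/2)) • (f n - star (f n))) * τ a))
    rw [norm_mul, Complex.norm_I, one_mul] at hle
    refine lt_of_le_of_lt hle ?_
    have := add_lt_add (hn1 τ hτ) (hn2 τ hτ)
    linarith
  rw [Metric.tendsto_atTop]
  intro ε hε
  obtain ⟨N, hN⟩ := Filter.eventually_atTop.1 (hmain (ε/2) (by positivity))
  refine ⟨N, fun n hn => ?_⟩
  have h2 : 0 ≤ sSup ((fun τ : WeakDual ℂ A =>
      ‖τ (f n * a) - τ (f n) * τ a‖) '' ExtremeTraceBoundary A) := by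
    refine Real.sSup_nonneg ?_
    rintro y ⟨τ, hτ, rfl⟩
    exact norm_nonneg _
  have h1 : sSup ((fun τ : WeakDual ℂ A =>
      ‖τ (f n * a) - τ (f n) * τ a‖) '' ExtremeTraceBoundary A) ≤ ε/2 := by
    refine Real.sSup_le ?_ (by positivity)
    rintro y ⟨τ, hτ, rfl⟩
    exact (hN n hn τ hτ).le
  rw [Real.dist_eq, sub_zero, _root_.abs_of_nonneg h2]
  linarith
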